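/- Let G(t) be symmetric N×N matrices with σ_min I ⪯ G(t) ⪯ (5/4)σ_max I, and let η satisfy 0 < η ≤ 4/(5σ_max). If s(t+1) = (I − ηG(t))s(t) + χ(t) with ‖χ(t)‖ ≤ (ησ_min/4)‖s(t)‖ for all t, then the loss L(t) := ‖s(t)‖² satisfies L(t) ≤ (1 − ησ_min/2)^{2t} L(0) ≤ (1 − ησ_min/2)^t L(0). -/
import Mathlib


open Matrix

/-- Symmetry of the quadratic form for a symmetric matrix. -/
lemma aux_form_symm {N : ℕ} (A : Matrix (Fin N) (Fin N) ℝ) (hA : A.IsSymm)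
    (x y : Fin N → ℝ) : x ⬝ᵥ A.mulVec y = y ⬝ᵥ A.mulVec x := by
  calc x ⬝ᵥ A.mulVec y = (x ᵥ* A) ⬝ᵥ y := (dotProduct_mulVec x A y)
    _ = (Aᵀ *ᵥ x) ⬝ᵥ y := by rw [mulVec_transpose]
    _ = (A *ᵥ x) ⬝ᵥ y := by rw [hA]
    _ = y ⬝ᵥ A.mulVec x := dotProduct_comm _ _

/-- Cauchy–Schwarz for a PSD symmetric quadratic form. -/
lemma aux_cs {N : ℕ} (A : Matrix (Fin N) (Fin N) ℝ) (hA : A.IsSymm)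
    (hpsd : ∀ x : Fin N → ℝ, 0 ≤ x ⬝ᵥ A.mulVec x) (x y : Fin N → ℝ) :
    (x ⬝ᵥ A.mulVec y) ^ 2 ≤ (x ⬝ᵥ A.mulVec x) * (y ⬝ᵥ A.mulVec y) := by
  have hsy : y ⬝ᵥ A.mulVec x = x ⬝ᵥ A.mulVec y := aux_form_symm A hA y x
  have h : ∀ t : ℝ, 0 ≤ (y ⬝ᵥ A.mulVec y) * (t * t) + (2 * (x ⬝ᵥ A.mulVec y)) * t
      + x ⬝ᵥ A.mulVec x := by
    intro t
    have := hpsd (x + t • y)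
    have hexp : (x + t • y) ⬝ᵥ A.mulVec (x + t • y)
        = (y ⬝ᵥ A.mulVec y) * (t * t) + (2 * (x ⬝ᵥ A.mulVec y)) * t
          + x ⬝ᵥ A.mulVec x := by
      simp only [mulVec_add, mulVec_smul, dotProduct_add, add_dotProduct,
        dotProduct_smul, smul_dotProduct, smul_eq_mul]
      rw [hsy]; ring
    linarith [hexp ▸ this]
  have hd := discrim_le_zero h
  rw [discrim] at hd
  nlinarith [hd]

/-- Operator-norm style bound from quadratic form bounds for symmetric PSD matrices. -/
lemma aux_opnorm {N : ℕ} (A : Matrix (Fin N) (Fin N) ℝ) (hA : A.IsSymm) (c : ℝ)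
    (hpsd : ∀ x : Fin N → ℝ, 0 ≤ x ⬝ᵥ A.mulVec x)
    (hup : ∀ x : Fin N → ℝ, x ⬝ᵥ A.mulVec x ≤ c * ∑ i, x i ^ 2)
    (x : Fin N → ℝ) :
    (∑ i, (A.mulVec x) i ^ 2) ≤ c ^ 2 * ∑ i, x i ^ 2 := by
  set y := A.mulVec x with hy
  have hyy : ∑ i, y i ^ 2 = x ⬝ᵥ A.mulVec y := by
    rw [aux_form_symm A hA x y]
    simp [dotProduct, hy, sq]
  have hcs := aux_cs A hA hpsd x y
  have h1 := hup x
  have h2 := hup y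
  have hx0 : (0:ℝ) ≤ ∑ i, x i ^ 2 := Finset.sum_nonneg fun _ _ => sq_nonneg _
  have hy0 : (0:ℝ) ≤ ∑ i, y i ^ 2 := Finset.sum_nonneg fun _ _ => sq_nonneg _
  rcases eq_or_lt_of_le hy0 with h | h
  · rw [← h]; positivity
  · have hq : (∑ i, y i ^ 2) ^ 2 ≤ (c * ∑ i, x i ^ 2) * (c * ∑ i, y i ^ 2) := by
      have h3 : (x ⬝ᵥ A.mulVec y) ^ 2 ≤ (c * ∑ i, x i ^ 2) * (c * ∑ i, y i ^ 2) := by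
        refine hcs.trans ?_
        nlinarith [hpsd x, hpsd y]
      calc (∑ i, y i ^ 2) ^ 2 = (x ⬝ᵥ A.mulVec y) ^ 2 := by rw [hyy]
        _ ≤ _ := h3
    nlinarith [h, hq]

/-- Triangle inequality for the Euclidean norm written with sums. -/
lemma aux_tri {N : ℕ} (u v : Fin N → ℝ) :
    Real.sqrt (∑ i, (u + v) i ^ 2) ≤
      Real.sqrt (∑ i, u i ^ 2) + Real.sqrt (∑ i, v i ^ 2) := by
  have hu : (0:ℝ) ≤ ∑ i, u i ^ 2 := Finset.sum_nonneg fun _ _ => sq_nonneg _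
  have hv : (0:ℝ) ≤ ∑ i, v i ^ 2 := Finset.sum_nonneg fun _ _ => sq_nonneg _
  have hcs := Real.sum_mul_le_sqrt_mul_sqrt Finset.univ u v
  have hexp : ∑ i, (u + v) i ^ 2
      = (∑ i, u i ^ 2) + 2 * (∑ i, u i * v i) + ∑ i, v i ^ 2 := by
    rw [Finset.sum_congr rfl (fun i _ => by simp only [Pi.add_apply]; ring :
      ∀ i ∈ Finset.univ, (u + v) i ^ 2 = u i ^ 2 + 2 * (u i * v i) + v i ^ 2)]
    rw [Finset.sum_add_distrib, Finset.sum_add_distrib, ← Finset.mul_sum]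
  have hsq : ∑ i, (u + v) i ^ 2
      ≤ (Real.sqrt (∑ i, u i ^ 2) + Real.sqrt (∑ i, v i ^ 2)) ^ 2 := by
    rw [hexp]
    have h1 : Real.sqrt (∑ i, u i ^ 2) ^ 2 = ∑ i, u i ^ 2 := Real.sq_sqrt hu
    have h2 : Real.sqrt (∑ i, v i ^ 2) ^ 2 = ∑ i, v i ^ 2 := Real.sq_sqrt hv
    nlinarith [hcs]
  calc Real.sqrt (∑ i, (u + v) i ^ 2)
      ≤ Real.sqrt ((Real.sqrt (∑ i, u i ^ 2) + Real.sqrt (∑ i, v i ^ 2)) ^ 2) :=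
        Real.sqrt_le_sqrt hsq
    _ = _ := Real.sqrt_sq (by positivity)

/-- Abstract form of the discrete GD global linear convergence (Theorem 1): if the Gram
matrices are symmetric with `σ_min I ⪯ G(t) ⪯ (5/4) σ_max I`, the step size satisfies
`0 < η ≤ 4/(5 σ_max)`, and `s(t+1) = (I - η G(t)) s(t) + χ(t)` with
`‖χ(t)‖ ≤ (η σ_min/4) ‖s(t)‖`, then `L(t) = ‖s(t)‖²` satisfies
`L(t) ≤ (1 - η σ_min/2)^{2t} L(0) ≤ (1 - η σ_min/2)^t L(0)`. -/
theorem stmt_19 (N : ℕ) (η σmin σmax : ℝ)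
    (hσmin : 0 < σmin) (hσmax : 0 < σmax)
    (hη : 0 < η) (hη' : η ≤ 4 / (5 * σmax))
    (G : ℕ → Matrix (Fin N) (Fin N) ℝ)
    (hGsymm : ∀ t, (G t).IsSymm)
    (hGlo : ∀ t, ∀ x : Fin N → ℝ, σmin * ∑ i, x i ^ 2 ≤ x ⬝ᵥ (G t).mulVec x)
    (hGhi : ∀ t, ∀ x : Fin N → ℝ, x ⬝ᵥ (G t).mulVec x ≤ 5 / 4 * σmax * ∑ i, x i ^ 2)
    (s χ : ℕ → Fin N → ℝ)
    (hrec : ∀ t, s (t + 1) = (s t - η • (G t).mulVec (s t)) + χ t)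
    (hχ : ∀ t, Real.sqrt (∑ i, χ t i ^ 2) ≤
      η * σmin / 4 * Real.sqrt (∑ i, s t i ^ 2)) :
    ∀ t, (∑ i, s t i ^ 2) ≤ (1 - η * σmin / 2) ^ (2 * t) * ∑ i, s 0 i ^ 2 ∧
      (1 - η * σmin / 2) ^ (2 * t) * (∑ i, s 0 i ^ 2) ≤
        (1 - η * σmin / 2) ^ t * ∑ i, s 0 i ^ 2 := by
  rcases Nat.eq_zero_or_pos N with hN | hN
  · subst hN
    intro t
    simp
  -- N > 0 : get σmin ≤ 5/4 σmax from a unit vector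
  obtain ⟨i0⟩ : Nonempty (Fin N) := ⟨⟨0, hN⟩⟩
  have hησmax : η * (5 * σmax) ≤ 4 := by
    rw [le_div_iff₀ (by positivity)] at hη'
    linarith
  have hone : (∑ i, (Pi.single i0 (1:ℝ) : Fin N → ℝ) i ^ 2) = 1 := by
    rw [Finset.sum_eq_single i0]
    · simp
    · intro b _ hb; simp [Pi.single_apply, hb]
    · simp
  have hcomp : σmin ≤ 5 / 4 * σmax := by
    have h1 := hGlo 0 (Pi.single i0 (1:ℝ))
    have h2 := hGhi 0 (Pi.single i0 (1:ℝ))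
    rw [hone] at h1 h2
    linarith
  have hησmin : η * σmin ≤ 1 := by nlinarith
  set c : ℝ := 1 - η * σmin / 2 with hc
  have hc0 : 0 ≤ c := by rw [hc]; linarith
  have hc1 : c ≤ 1 := by rw [hc]; nlinarith [mul_pos hη hσmin]
  have hs0 : ∀ t, (0:ℝ) ≤ ∑ i, s t i ^ 2 :=
    fun t => Finset.sum_nonneg fun _ _ => sq_nonneg _
  -- key norm contraction
  have key : ∀ t, Real.sqrt (∑ i, s t i ^ 2) ≤ c ^ t * Real.sqrt (∑ i, s 0 i ^ 2) := by
    intro t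
    induction t with
    | zero => simp
    | succ t ih =>
      set A : Matrix (Fin N) (Fin N) ℝ := 1 - η • G t with hA
      have hAsymm : A.IsSymm := isSymm_one.sub ((hGsymm t).smul η)
      have hform : ∀ x : Fin N → ℝ, x ⬝ᵥ A.mulVec x
          = (∑ i, x i ^ 2) - η * (x ⬝ᵥ (G t).mulVec x) := by
        intro x
        rw [hA, sub_mulVec, one_mulVec, smul_mulVec, dotProduct_sub,
          dotProduct_smul, smul_eq_mul]
        congr 1
        simp [dotProduct, sq]
      have hpsd : ∀ x : Fin N → ℝ, 0 ≤ x ⬝ᵥ A.mulVec x := by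
        intro x
        rw [hform]
        have h2 := hGhi t x
        have hx0 : (0:ℝ) ≤ ∑ i, x i ^ 2 := Finset.sum_nonneg fun _ _ => sq_nonneg _
        nlinarith
      have hup : ∀ x : Fin N → ℝ, x ⬝ᵥ A.mulVec x ≤ (1 - η * σmin) * ∑ i, x i ^ 2 := by
        intro x
        rw [hform]
        have h1 := hGlo t x
        nlinarith
      have hop := aux_opnorm A hAsymm (1 - η * σmin) hpsd hup (s t)
      have hc1' : (0:ℝ) ≤ 1 - η * σmin := by linarith
      have hAn : Real.sqrt (∑ i, (A.mulVec (s t)) i ^ 2)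
          ≤ (1 - η * σmin) * Real.sqrt (∑ i, s t i ^ 2) := by
        calc Real.sqrt (∑ i, (A.mulVec (s t)) i ^ 2)
            ≤ Real.sqrt ((1 - η * σmin) ^ 2 * ∑ i, s t i ^ 2) := Real.sqrt_le_sqrt hop
          _ = (1 - η * σmin) * Real.sqrt (∑ i, s t i ^ 2) := by
              rw [Real.sqrt_mul (by positivity), Real.sqrt_sq hc1']
      have hmv : A.mulVec (s t) = s t - η • (G t).mulVec (s t) := by
        rw [hA, sub_mulVec, one_mulVec, smul_mulVec]
      have hstep : Real.sqrt (∑ i, s (t+1) i ^ 2)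
          ≤ (1 - η * σmin) * Real.sqrt (∑ i, s t i ^ 2)
            + η * σmin / 4 * Real.sqrt (∑ i, s t i ^ 2) := by
        rw [hrec t, ← hmv]
        exact (aux_tri (A.mulVec (s t)) (χ t)).trans (add_le_add hAn (hχ t))
      have hsqrt0 : (0:ℝ) ≤ Real.sqrt (∑ i, s t i ^ 2) := Real.sqrt_nonneg _
      have : Real.sqrt (∑ i, s (t+1) i ^ 2) ≤ c * Real.sqrt (∑ i, s t i ^ 2) := by
        refine hstep.trans ?_
        rw [hc]
        nlinarith [mul_pos hη hσmin]
      calc Real.sqrt (∑ i, s (t+1) i ^ 2) ≤ c * Real.sqrt (∑ i, s t i ^ 2) := this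
        _ ≤ c * (c ^ t * Real.sqrt (∑ i, s 0 i ^ 2)) :=
            mul_le_mul_of_nonneg_left ih hc0
        _ = c ^ (t+1) * Real.sqrt (∑ i, s 0 i ^ 2) := by ring
  intro t
  constructor
  · have h := key t
    have := pow_le_pow_left₀ (Real.sqrt_nonneg _) h 2
    rw [Real.sq_sqrt (hs0 t), mul_pow, ← pow_mul, Real.sq_sqrt (hs0 0)] at this
    rwa [mul_comm t 2] at this
  · have hpt : c ^ t ≤ 1 := pow_le_one₀ hc0 hc1
    have h2t : c ^ (2*t) ≤ c ^ t := by
      calc c ^ (2*t) = c ^ t * c ^ t := by rw [two_mul, pow_add]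
        _ ≤ 1 * c ^ t := mul_le_mul_of_nonneg_right hpt (pow_nonneg hc0 t)
        _ = c ^ t := one_mul _
    exact mul_le_mul_of_nonneg_right h2t (hs0 0)
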